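/- Let $\Gamma$ be a finitely generated residually finite group with generating set $X$, and let $\sub_\Gamma(k)$ denote the number of normal subgroups of $\Gamma$ of index at most $k$. Then $\log(\word_{\Gamma,X}(n)) \leq \sub_\Gamma(\mathrm{D}^{\lhd}_{\Gamma,X}(2n)) \cdot \log(\mathrm{D}^{\lhd}_{\Gamma,X}(2n))$, where $\word_{\Gamma,X}(n) = |B_{\Gamma,X}(n)|$ is the word growth function. -/

import Mathlib

/-- Word length with respect to a (symmetrized) generating set `X`. -/
noncomputable def wordLength {G : Type*} [Group G] (X : Set G) (g : G) : ℕ :=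
  sInf {n | ∃ w : List G, (∀ x ∈ w, x ∈ X ∨ x⁻¹ ∈ X) ∧ w.prod = g ∧ w.length = n}

/-- The word growth function: the cardinality of the ball of radius `n`. -/
noncomputable def wordGrowth {G : Type*} [Group G] (X : Set G) (n : ℕ) : ℕ :=
  Nat.card {g : G // wordLength X g ≤ n}

/-- The number of normal subgroups of index at most `k`. -/
noncomputable def normalSubgroupGrowth (G : Type*) [Group G] (k : ℕ) : ℕ :=
  Nat.card {H : Subgroup G // H.Normal ∧ H.FiniteIndex ∧ H.index ≤ k}

/-- The normal divisibility function: the least `k` such that every nontrivial element of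
word length at most `m` lies outside some normal subgroup of index at most `k`. -/
noncomputable def normalDivMax {G : Type*} [Group G] (X : Set G) (m : ℕ) : ℕ :=
  sInf {k | ∀ g : G, g ≠ 1 → wordLength X g ≤ m →
    ∃ H : Subgroup G, H.Normal ∧ H.FiniteIndex ∧ H.index ≤ k ∧ g ∉ H}

section Aux

variable {G : Type*} [Group G] {X : Set G}

lemma exists_word (hXgen : Subgroup.closure X = ⊤) (g : G) :
    ∃ w : List G, (∀ x ∈ w, x ∈ X ∨ x⁻¹ ∈ X) ∧ w.prod = g := by
  have hg : g ∈ Submonoid.closure (X ∪ X⁻¹) := by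
    rw [← Subgroup.closure_toSubmonoid]
    show g ∈ (Subgroup.closure X).toSubmonoid
    rw [hXgen]; trivial
  obtain ⟨w, hw, hprod⟩ := Submonoid.exists_list_of_mem_closure hg
  refine ⟨w, fun x hx => ?_, hprod⟩
  rcases hw x hx with h | h
  · exact Or.inl h
  · exact Or.inr (Set.mem_inv.mp h)

lemma exists_word_length (hXgen : Subgroup.closure X = ⊤) (g : G) :
    ∃ w : List G, (∀ x ∈ w, x ∈ X ∨ x⁻¹ ∈ X) ∧ w.prod = g ∧ w.length = wordLength X g := by
  obtain ⟨w, hw, hp⟩ := exists_word hXgen g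
  exact Nat.sInf_mem (⟨w.length, w, hw, hp, rfl⟩ :
    {n | ∃ w : List G, (∀ x ∈ w, x ∈ X ∨ x⁻¹ ∈ X) ∧ w.prod = g ∧ w.length = n}.Nonempty)

lemma wordLength_le_of_word {w : List G} (hw : ∀ x ∈ w, x ∈ X ∨ x⁻¹ ∈ X) :
    wordLength X w.prod ≤ w.length :=
  Nat.sInf_le ⟨w, hw, rfl, rfl⟩

lemma wordLength_inv_le (hXgen : Subgroup.closure X = ⊤) (g : G) :
    wordLength X g⁻¹ ≤ wordLength X g := by
  obtain ⟨w, hw, hp, hl⟩ := exists_word_length hXgen g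
  have hcond : ∀ x ∈ (w.map fun y => y⁻¹).reverse, x ∈ X ∨ x⁻¹ ∈ X := by
    intro x hx
    rw [List.mem_reverse, List.mem_map] at hx
    obtain ⟨y, hy, rfl⟩ := hx
    rcases hw y hy with h | h
    · exact Or.inr (by simpa using h)
    · exact Or.inl h
  have := wordLength_le_of_word hcond
  rw [← List.prod_inv_reverse, hp] at this
  simpa [hl] using this

lemma wordLength_mul_le (hXgen : Subgroup.closure X = ⊤) (a b : G) :
    wordLength X (a * b) ≤ wordLength X a + wordLength X b := by
  obtain ⟨wa, hwa, hpa, hla⟩ := exists_word_length hXgen a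
  obtain ⟨wb, hwb, hpb, hlb⟩ := exists_word_length hXgen b
  have hcond : ∀ x ∈ wa ++ wb, x ∈ X ∨ x⁻¹ ∈ X := by
    intro x hx
    rcases List.mem_append.mp hx with h | h
    · exact hwa x h
    · exact hwb x h
  have := wordLength_le_of_word hcond
  rw [List.prod_append, hpa, hpb] at this
  simpa [hla, hlb] using this

lemma ball_finite (hXfin : X.Finite) (hXgen : Subgroup.closure X = ⊤) (m : ℕ) :
    {g : G | wordLength X g ≤ m}.Finite := by
  have hY : (X ∪ X⁻¹).Finite := hXfin.union hXfin.inv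
  haveI := hY.to_subtype
  have hfin : {w : List ↥(X ∪ X⁻¹) | w.length ≤ m}.Finite := List.finite_length_le _ m
  apply Set.Finite.subset (hfin.image fun w => (w.map Subtype.val).prod)
  intro g hg
  obtain ⟨w, hw, hp, hl⟩ := exists_word_length hXgen g
  have hmem : ∀ x ∈ w, x ∈ X ∪ X⁻¹ := by
    intro x hx
    rcases hw x hx with h | h
    · exact Or.inl h
    · exact Or.inr (Set.mem_inv.mpr h)
  refine ⟨w.attach.map fun x => (⟨x.1, hmem x.1 x.2⟩ : ↥(X ∪ X⁻¹)), ?_, ?_⟩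
  · simp only [Set.mem_setOf_eq, List.length_map, List.length_attach, hl]
    exact hg
  · simp only [List.map_map]
    have : (w.attach.map fun x => ((⟨x.1, hmem x.1 x.2⟩ : ↥(X ∪ X⁻¹)) : G)) = w := by
      simp
    rw [show (Subtype.val ∘ fun x : {x // x ∈ w} => (⟨x.1, hmem x.1 x.2⟩ : ↥(X ∪ X⁻¹)))
        = fun x : {x // x ∈ w} => x.1 from rfl]
    simp [hp]

lemma finite_monoidHom (hXfin : X.Finite) (hXgen : Subgroup.closure X = ⊤)
    (T : Type*) [Group T] [Finite T] : Finite (G →* T) := by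
  haveI := hXfin.to_subtype
  exact Finite.of_injective (fun f => (fun x : X => f x))
    (fun f g h => MonoidHom.eq_of_eqOn_dense hXgen fun x hx => congrFun h ⟨x, hx⟩)

lemma finite_normal_le (hXfin : X.Finite) (hXgen : Subgroup.closure X = ⊤) (k : ℕ) :
    Finite {H : Subgroup G // H.Normal ∧ H.FiniteIndex ∧ H.index ≤ k} := by
  haveI : Finite (G →* Equiv.Perm (Fin k)) := finite_monoidHom hXfin hXgen _
  have key : ∀ H : {H : Subgroup G // H.Normal ∧ H.FiniteIndex ∧ H.index ≤ k},
      ∃ f : G →* Equiv.Perm (Fin k), f.ker = H.1 := by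
    rintro ⟨H, hN, hF, hk⟩
    haveI := hF
    haveI : Finite (G ⧸ H) := Subgroup.finite_quotient_of_finiteIndex (H := H)
    haveI : Fintype (G ⧸ H) := Fintype.ofFinite _
    have hcard : Fintype.card (G ⧸ H) ≤ Fintype.card (Fin k) := by
      rw [Fintype.card_fin, ← Nat.card_eq_fintype_card, ← Subgroup.index_eq_card]
      exact hk
    obtain ⟨e⟩ := Function.Embedding.nonempty_of_card_le hcard
    refine ⟨(Equiv.Perm.viaEmbeddingHom e).comp (MulAction.toPermHom G (G ⧸ H)), ?_⟩
    have h1 : ((Equiv.Perm.viaEmbeddingHom e).comp (MulAction.toPermHom G (G ⧸ H))).ker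
        = (MulAction.toPermHom G (G ⧸ H)).ker := by
      ext g
      rw [MonoidHom.mem_ker, MonoidHom.comp_apply,
        ← map_one (Equiv.Perm.viaEmbeddingHom e),
        (Equiv.Perm.viaEmbeddingHom_injective e).eq_iff, ← MonoidHom.mem_ker]
    rw [h1, ← Subgroup.normalCore_eq_ker, @Subgroup.normalCore_eq_self _ _ H hN]
  choose f hf using key
  exact Finite.of_injective f fun H K h => Subtype.ext (by rw [← hf H, ← hf K, h])

end Aux

theorem stmt_12 {Γ : Type*} [Group Γ] (X : Set Γ) (hXfin : X.Finite)
    (hXgen : Subgroup.closure X = ⊤)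
    (hrf : ∀ g : Γ, g ≠ 1 → ∃ H : Subgroup Γ, H.Normal ∧ H.FiniteIndex ∧ g ∉ H)
    (n : ℕ) :
    Real.log (wordGrowth X n) ≤
      normalSubgroupGrowth Γ (normalDivMax X (2 * n)) *
        Real.log (normalDivMax X (2 * n)) := by
  classical
  set D := normalDivMax X (2 * n) with hDdef
  -- the defining set of `normalDivMax` is nonempty, so `D` satisfies its defining property
  have hball : {g : Γ | wordLength X g ≤ 2 * n}.Finite := ball_finite hXfin hXgen (2 * n)
  have hchoice : ∀ g : Γ, ∃ H : Subgroup Γ,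
      g ≠ 1 → (H.Normal ∧ H.FiniteIndex ∧ g ∉ H) := by
    intro g
    by_cases hg : g = 1
    · exact ⟨⊤, fun h => absurd hg h⟩
    · obtain ⟨H, h1, h2, h3⟩ := hrf g hg
      exact ⟨H, fun _ => ⟨h1, h2, h3⟩⟩
  choose Hf hHf using hchoice
  have hne : {k | ∀ g : Γ, g ≠ 1 → wordLength X g ≤ 2 * n →
      ∃ H : Subgroup Γ, H.Normal ∧ H.FiniteIndex ∧ H.index ≤ k ∧ g ∉ H}.Nonempty := by
    refine ⟨hball.toFinset.sup fun g => (Hf g).index, fun g hg hwl => ?_⟩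
    obtain ⟨h1, h2, h3⟩ := hHf g hg
    refine ⟨Hf g, h1, h2, ?_, h3⟩
    exact Finset.le_sup (f := fun g => (Hf g).index) (hball.mem_toFinset.mpr hwl)
  have hD : ∀ g : Γ, g ≠ 1 → wordLength X g ≤ 2 * n →
      ∃ H : Subgroup Γ, H.Normal ∧ H.FiniteIndex ∧ H.index ≤ D ∧ g ∉ H :=
    Nat.sInf_mem hne
  -- the set of normal subgroups of index at most D is finite
  haveI hSfin : Finite {H : Subgroup Γ // H.Normal ∧ H.FiniteIndex ∧ H.index ≤ D} :=
    finite_normal_le hXfin hXgen D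
  haveI : Fintype {H : Subgroup Γ // H.Normal ∧ H.FiniteIndex ∧ H.index ≤ D} :=
    Fintype.ofFinite _
  set S := normalSubgroupGrowth Γ D with hSdef
  set Ω : Subgroup Γ := ⨅ H : {H : Subgroup Γ // H.Normal ∧ H.FiniteIndex ∧ H.index ≤ D}, H.1
    with hΩdef
  haveI hΩfi : Ω.FiniteIndex := Subgroup.finiteIndex_iInf fun H => H.2.2.1
  -- index bound
  have hindex : Ω.index ≤ D ^ S := by
    calc Ω.index ≤ ∏ H : {H : Subgroup Γ // H.Normal ∧ H.FiniteIndex ∧ H.index ≤ D}, H.1.index :=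
          Subgroup.index_iInf_le _
    _ ≤ ∏ _H : {H : Subgroup Γ // H.Normal ∧ H.FiniteIndex ∧ H.index ≤ D}, D :=
          Finset.prod_le_prod' fun H _ => H.2.2.2
    _ = D ^ S := by
          rw [Finset.prod_const, Finset.card_univ, hSdef, normalSubgroupGrowth,
            Nat.card_eq_fintype_card]
  -- the ball of radius n injects into Γ ⧸ Ω
  have hinj : Function.Injective
      (fun g : {g : Γ // wordLength X g ≤ n} => (QuotientGroup.mk g.1 : Γ ⧸ Ω)) := by
    rintro ⟨a, ha⟩ ⟨b, hb⟩ hab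
    simp only [QuotientGroup.eq] at hab
    by_contra hne'
    have hne'' : a⁻¹ * b ≠ 1 := by
      intro h
      exact hne' (Subtype.ext (by rwa [inv_mul_eq_one] at h))
    have hwl : wordLength X (a⁻¹ * b) ≤ 2 * n := by
      calc wordLength X (a⁻¹ * b) ≤ wordLength X a⁻¹ + wordLength X b :=
            wordLength_mul_le hXgen _ _
      _ ≤ wordLength X a + wordLength X b :=
            Nat.add_le_add_right (wordLength_inv_le hXgen a) _
      _ ≤ 2 * n := by omega
    obtain ⟨H, h1, h2, h3, h4⟩ := hD _ hne'' hwl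
    have hle : Ω ≤ H := iInf_le (fun H : {H : Subgroup Γ // H.Normal ∧ H.FiniteIndex ∧
      H.index ≤ D} => H.1) ⟨H, h1, h2, h3⟩
    exact h4 (hle hab)
  haveI : Finite (Γ ⧸ Ω) := Subgroup.finite_quotient_of_finiteIndex (H := Ω)
  have hcard : wordGrowth X n ≤ D ^ S := by
    calc wordGrowth X n ≤ Nat.card (Γ ⧸ Ω) := Nat.card_le_card_of_injective _ hinj
    _ = Ω.index := (Subgroup.index_eq_card Ω).symm
    _ ≤ D ^ S := hindex
  -- conclude with logarithms
  rcases Nat.eq_zero_or_pos (wordGrowth X n) with h0 | hpos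
  · rw [h0]
    simp only [Nat.cast_zero, Real.log_zero]
    exact mul_nonneg (Nat.cast_nonneg _) (Real.log_natCast_nonneg _)
  · have : Real.log (wordGrowth X n) ≤ Real.log ((D : ℝ) ^ S) := by
      apply Real.log_le_log (by exact_mod_cast hpos)
      exact_mod_cast hcard
    rwa [Real.log_pow] at this
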